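/- Let g(x) = a(ν) · x · ₂F₁(1/2, 1/2; ν/2; x²) with a(ν) = (ν-2) Γ((ν-1)/2)² / (2 Γ(ν/2)²), ν > 2. Then for all x ∈ [-1,1], |g(x)| ≤ |x|, i.e., the correlation of the t process is dominated in absolute value by the underlying Gaussian correlation. -/

import Mathlib

open Real

/-- Pochhammer symbol `(s)_k`. -/
noncomputable def poch (s : ℝ) (k : ℕ) : ℝ := (ascPochhammer ℝ k).eval s

/-- Gauss hypergeometric function `₂F₁(a,b;c;x)` as a series. -/
noncomputable def hyp2F1 (a b c x : ℝ) : ℝ :=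
  ∑' k : ℕ, poch a k * poch b k / poch c k * x ^ k / (Nat.factorial k)

/-- The factor `a(ν) = (ν-2)Γ((ν-1)/2)²/(2Γ(ν/2)²)`. -/
noncomputable def acoef (ν : ℝ) : ℝ :=
  (ν - 2) * Real.Gamma ((ν-1)/2) ^ 2 / (2 * Real.Gamma (ν/2) ^ 2)

/-- The correlation map of the standardized `t` process. -/
noncomputable def gfun (ν x : ℝ) : ℝ := acoef ν * x * hyp2F1 (1/2) (1/2) (ν/2) (x^2)



open Finset

lemma poch_zero (s : ℝ) : poch s 0 = 1 := by simp [poch]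

lemma poch_succ (s : ℝ) (k : ℕ) : poch s (k+1) = poch s k * (s + k) := by
  simp [poch, ascPochhammer_succ_eval]

lemma poch_pos {s : ℝ} (hs : 0 < s) (k : ℕ) : 0 < poch s k := by
  induction k with
  | zero => simp [poch_zero]
  | succ n ih => rw [poch_succ]; positivity

/-- `b k = (1/2)_k / k!`. -/
noncomputable def bb (k : ℕ) : ℝ := poch (1/2) k / (Nat.factorial k)

lemma bb_pos (k : ℕ) : 0 < bb k := by
  have := poch_pos (by norm_num : (0:ℝ) < 1/2) k
  have h2 : (0:ℝ) < (Nat.factorial k : ℝ) := by positivity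
  exact div_pos this h2

lemma bb_zero : bb 0 = 1 := by simp [bb, poch_zero]

lemma bb_rec (k : ℕ) : ((k:ℝ)+1) * bb (k+1) = ((k:ℝ) + 1/2) * bb k := by
  have hf : (Nat.factorial (k+1) : ℝ) = ((k:ℝ)+1) * (Nat.factorial k : ℝ) := by
    push_cast [Nat.factorial_succ]; ring
  have hf0 : (Nat.factorial k : ℝ) ≠ 0 := by positivity
  rw [bb, bb, poch_succ, hf]
  field_simp
  ring

lemma w_eq (m : ℕ) : 2 * ∑ j ∈ range (m+1), (j:ℝ) * (bb j * bb (m-j))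
    = (m:ℝ) * ∑ j ∈ range (m+1), bb j * bb (m-j) := by
  have h1 : ∑ j ∈ range (m+1), (j:ℝ) * (bb j * bb (m-j))
      = ∑ j ∈ range (m+1), ((m:ℝ)-(j:ℝ)) * (bb j * bb (m-j)) := by
    rw [← Finset.sum_range_reflect]
    refine Finset.sum_congr rfl fun j hj => ?_
    have hj' : j ≤ m := by simpa using Nat.lt_succ_iff.mp (Finset.mem_range.mp hj)
    have e1 : m + 1 - 1 - j = m - j := by omega
    have e2 : m - (m - j) = j := by omega
    have e3 : ((m - j : ℕ) : ℝ) = (m:ℝ) - (j:ℝ) := by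
      rw [Nat.cast_sub hj']
    rw [e1, e2, e3]
    ring
  rw [two_mul]
  nth_rewrite 2 [h1]
  rw [← Finset.sum_add_distrib, Finset.mul_sum]
  refine Finset.sum_congr rfl fun j hj => ?_
  ring

lemma conv_eq : ∀ n : ℕ, ∑ j ∈ range (n+1), bb j * bb (n-j) = 1 := by
  intro n
  induction n with
  | zero => simp [bb_zero]
  | succ n ih =>
    have key : ∑ j ∈ range (n+1), ((j:ℝ)+1/2) * (bb j * bb (n-j))
        = ((n:ℝ)+1)/2 * ∑ j ∈ range (n+1), bb j * bb (n-j) := by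
      have expand : ∑ j ∈ range (n+1), ((j:ℝ)+1/2) * (bb j * bb (n-j))
          = (∑ j ∈ range (n+1), (j:ℝ) * (bb j * bb (n-j)))
            + (1/2) * ∑ j ∈ range (n+1), bb j * bb (n-j) := by
        rw [Finset.mul_sum, ← Finset.sum_add_distrib]
        exact Finset.sum_congr rfl fun j hj => by ring
      have hw := w_eq n
      rw [expand]
      nlinarith [hw]
    have keyB : ∑ j ∈ range (n+1), ((j:ℝ)+1/2) * (bb j * bb (n-j))
        = ∑ j ∈ range (n+1), (((j:ℝ)+1) * bb (j+1)) * bb (n-j) := by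
      refine Finset.sum_congr rfl fun j hj => ?_
      have := bb_rec j
      nlinarith [this, bb_pos (n-j)]
    have keyC : ∑ j ∈ range (n+2), (j:ℝ) * (bb j * bb (n+1-j))
        = ∑ j ∈ range (n+1), (((j:ℝ)+1) * bb (j+1)) * bb (n-j) := by
      rw [Finset.sum_range_succ']
      simp only [Nat.cast_zero, zero_mul, add_zero, Nat.succ_sub_succ]
      refine Finset.sum_congr rfl fun j hj => ?_
      push_cast
      ring
    have hw1 := w_eq (n+1)
    rw [keyC, ← keyB, key, ih] at hw1
    have hn1 : ((n:ℝ)+1) ≠ 0 := by positivity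
    push_cast at hw1 ⊢
    field_simp at hw1
    linarith [hw1]

lemma psum_le {v : ℝ} (h0 : 0 ≤ v) (h1 : v < 1) (N : ℕ) :
    ∑ k ∈ range N, bb k * v^k ≤ (1-v) ^ (-(1/2) : ℝ) := by
  set P := ∑ k ∈ range N, bb k * v^k with hP
  have hPnn : 0 ≤ P := Finset.sum_nonneg fun k _ => mul_nonneg (bb_pos k).le (pow_nonneg h0 k)
  have hv1 : 0 < 1 - v := by linarith
  have hsq : P^2 ≤ (1-v)⁻¹ := by
    have e1 : P^2 = ∑ p ∈ range N ×ˢ range N, bb p.1 * bb p.2 * v^(p.1+p.2) := by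
      rw [hP, sq, Finset.sum_mul_sum, Finset.sum_product]
      refine Finset.sum_congr rfl fun i _ => Finset.sum_congr rfl fun j _ => ?_
      rw [pow_add]; ring
    have hsub : range N ×ˢ range N ⊆ (range (2*N)).biUnion (fun m => Finset.HasAntidiagonal.antidiagonal m) := by
      intro p hp
      rw [Finset.mem_product, Finset.mem_range, Finset.mem_range] at hp
      rw [Finset.mem_biUnion]
      exact ⟨p.1 + p.2, Finset.mem_range.mpr (by omega), Finset.HasAntidiagonal.mem_antidiagonal.mpr rfl⟩
    have hdisj : ∀ m ∈ range (2*N), ∀ m' ∈ range (2*N), m ≠ m' →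
        Disjoint (Finset.HasAntidiagonal.antidiagonal m) (Finset.HasAntidiagonal.antidiagonal m') := by
      intro m _ m' _ hne
      rw [Finset.disjoint_left]
      intro p hp hp'
      rw [Finset.HasAntidiagonal.mem_antidiagonal] at hp hp'
      exact hne (hp ▸ hp')
    have e2 : ∑ p ∈ (range (2*N)).biUnion (fun m => Finset.HasAntidiagonal.antidiagonal m),
        bb p.1 * bb p.2 * v^(p.1+p.2) = ∑ m ∈ range (2*N), v^m := by
      rw [Finset.sum_biUnion hdisj]
      refine Finset.sum_congr rfl fun m _ => ?_
      have : ∑ p ∈ Finset.HasAntidiagonal.antidiagonal m, bb p.1 * bb p.2 * v^(p.1+p.2)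
          = ∑ p ∈ Finset.HasAntidiagonal.antidiagonal m, bb p.1 * bb p.2 * v^m := by
        refine Finset.sum_congr rfl fun p hp => ?_
        rw [Finset.HasAntidiagonal.mem_antidiagonal] at hp
        rw [hp]
      rw [this, ← Finset.sum_mul, Finset.Nat.sum_antidiagonal_eq_sum_range_succ_mk,
        conv_eq, one_mul]
    have e3 : ∑ m ∈ range (2*N), v^m ≤ (1-v)⁻¹ := by
      rcases eq_or_lt_of_le h0 with h | h
      · simp only [← h]
        rcases Nat.eq_zero_or_pos (2*N) with hN | hN
        · rw [hN]; simp
        · rw [Finset.sum_eq_single 0]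
          · norm_num
          · intro b _ hb; exact zero_pow hb
          · intro hh; exact absurd (Finset.mem_range.mpr hN) hh
      · rw [geom_sum_eq h1.ne]
        rw [div_le_iff_of_neg (by linarith)]
        have h2 : 0 < v^(2*N) := pow_pos h _
        have hinv : (1-v)⁻¹ * (1-v) = 1 := inv_mul_cancel₀ hv1.ne'
        nlinarith
    calc P^2 = _ := e1
      _ ≤ ∑ p ∈ (range (2*N)).biUnion (fun m => Finset.HasAntidiagonal.antidiagonal m),
          bb p.1 * bb p.2 * v^(p.1+p.2) :=
        Finset.sum_le_sum_of_subset_of_nonneg hsub (fun p _ _ => mul_nonneg (mul_nonneg (bb_pos _).le (bb_pos _).le) (pow_nonneg h0 _))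
      _ = ∑ m ∈ range (2*N), v^m := e2
      _ ≤ (1-v)⁻¹ := e3
  have : P = Real.sqrt (P^2) := (Real.sqrt_sq hPnn).symm
  rw [this]
  calc Real.sqrt (P^2) ≤ Real.sqrt ((1-v)⁻¹) := Real.sqrt_le_sqrt hsq
    _ = (1-v) ^ (-(1/2) : ℝ) := by
      rw [Real.rpow_neg hv1.le, ← Real.sqrt_eq_rpow, Real.sqrt_inv]

lemma Gamma_poch {s : ℝ} (hs : 0 < s) (k : ℕ) :
    Real.Gamma (s + k) = poch s k * Real.Gamma s := by
  induction k with
  | zero => simp [poch_zero]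
  | succ n ih =>
    have h1 : s + (n+1:ℕ) = (s + n) + 1 := by push_cast; ring
    rw [h1, Real.Gamma_add_one (by positivity), ih, poch_succ]
    ring

lemma cbeta_eq {u v : ℝ} (hu : 0 < u) (hv : 0 < v) :
    ∀ x ∈ Set.Icc (0:ℝ) 1,
      (x:ℂ)^((u:ℂ)-1) * (1-(x:ℂ))^((v:ℂ)-1) = ((x^(u-1)*(1-x)^(v-1) : ℝ) : ℂ) := by
  intro x hx
  have h1 : ((u:ℂ)-1) = ((u-1 : ℝ) : ℂ) := by push_cast; ring
  have h2 : ((v:ℂ)-1) = ((v-1 : ℝ) : ℂ) := by push_cast; ring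
  have h3 : (1-(x:ℂ)) = ((1-x : ℝ) : ℂ) := by push_cast; ring
  rw [h1, h2, h3, ← Complex.ofReal_cpow hx.1, ← Complex.ofReal_cpow (by linarith [hx.2]),
    ← Complex.ofReal_mul]

lemma rbeta_integrable {u v : ℝ} (hu : 0 < u) (hv : 0 < v) :
    IntervalIntegrable (fun x : ℝ => x ^ (u-1) * (1-x) ^ (v-1)) MeasureTheory.volume 0 1 := by
  have C := Complex.betaIntegral_convergent (u := (u:ℂ)) (v := (v:ℂ))
    (by simpa using hu) (by simpa using hv)
  rw [intervalIntegrable_iff] at C ⊢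
  have hre : MeasureTheory.IntegrableOn
      (fun x : ℝ => ((x:ℂ) ^ ((u:ℂ)-1) * (1-(x:ℂ)) ^ ((v:ℂ)-1)).re)
      (Set.uIoc (0:ℝ) 1) MeasureTheory.volume := C.re
  refine MeasureTheory.IntegrableOn.congr_fun hre (fun x hx => ?_) measurableSet_uIoc
  rw [Set.uIoc_of_le (zero_le_one : (0:ℝ) ≤ 1)] at hx
  have hx' : x ∈ Set.Icc (0:ℝ) 1 := ⟨hx.1.le, hx.2⟩
  rw [cbeta_eq hu hv x hx', Complex.ofReal_re]

lemma rbeta_value {u v : ℝ} (hu : 0 < u) (hv : 0 < v) :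
    ∫ x in (0:ℝ)..1, x ^ (u-1) * (1-x) ^ (v-1)
      = Real.Gamma u * Real.Gamma v / Real.Gamma (u+v) := by
  have hG : Complex.Gamma u * Complex.Gamma v
      = Complex.Gamma (u+v) * Complex.betaIntegral u v :=
    Complex.Gamma_mul_Gamma_eq_betaIntegral (by simpa using hu) (by simpa using hv)
  have hbeta : Complex.betaIntegral u v
      = ((∫ x in (0:ℝ)..1, x ^ (u-1) * (1-x) ^ (v-1) : ℝ) : ℂ) := by
    rw [Complex.betaIntegral, ← intervalIntegral.integral_ofReal]
    apply intervalIntegral.integral_congr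
    intro x hx
    rw [Set.uIcc_of_le (zero_le_one : (0:ℝ) ≤ 1)] at hx
    exact cbeta_eq hu hv x hx
  rw [hbeta] at hG
  have huv : (0:ℝ) < u + v := by linarith
  have hne : Real.Gamma (u+v) ≠ 0 := (Real.Gamma_pos_of_pos huv).ne'
  have h2 : Real.Gamma u * Real.Gamma v
      = Real.Gamma (u+v) * ∫ x in (0:ℝ)..1, x ^ (u-1) * (1-x) ^ (v-1) := by
    rw [← Complex.ofReal_add u v, Complex.Gamma_ofReal, Complex.Gamma_ofReal,
      Complex.Gamma_ofReal] at hG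
    exact_mod_cast hG
  field_simp
  linarith [h2]

set_option maxHeartbeats 1000000 in
lemma hyp_partial_bound {c : ℝ} (hc : 1 < c) {y : ℝ} (hy0 : 0 ≤ y) (hy1 : y ≤ 1) (N : ℕ) :
    ∑ k ∈ range N, poch (1/2) k * poch (1/2) k / poch c k * y^k / (Nat.factorial k)
      ≤ Real.Gamma c * Real.Gamma (c-1) / Real.Gamma (c-1/2)^2 := by
  have hG12 : 0 < Real.Gamma (1/2) := Real.Gamma_pos_of_pos (by norm_num)
  have hGc : 0 < Real.Gamma c := Real.Gamma_pos_of_pos (by linarith)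
  have hGc12 : 0 < Real.Gamma (c-1/2) := Real.Gamma_pos_of_pos (by linarith)
  have hGc12' : Real.Gamma (-(1:ℝ)/2 + c) ≠ 0 := by
    rw [show (-(1:ℝ)/2 + c) = c - 1/2 by ring]; exact hGc12.ne'
  have hGc1 : 0 < Real.Gamma (c-1) := Real.Gamma_pos_of_pos (by linarith)
  set K : ℝ := Real.Gamma c / (Real.Gamma (1/2) * Real.Gamma (c-1/2)) with hK
  have hKpos : 0 < K := by positivity
  set F : ℕ → ℝ → ℝ :=
    fun k x => (K * bb k * y^k) * (x ^ ((1/2 + (k:ℝ)) - 1) * (1-x) ^ ((c - 1/2) - 1)) with hF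
  have hFint : ∀ k, IntervalIntegrable (F k) MeasureTheory.volume 0 1 := fun k =>
    (rbeta_integrable (by positivity) (by linarith)).const_mul _
  have hterm : ∀ k, poch (1/2) k * poch (1/2) k / poch c k * y^k / (Nat.factorial k)
      = ∫ x in (0:ℝ)..1, F k x := by
    intro k
    have hval : ∫ x in (0:ℝ)..1, x ^ ((1/2 + (k:ℝ)) - 1) * (1-x) ^ ((c - 1/2) - 1)
        = Real.Gamma (1/2 + k) * Real.Gamma (c-1/2) / Real.Gamma (c + k) := by
      rw [rbeta_value (by positivity) (by linarith)]
      congr 1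
      congr 1
      ring
    have hint : ∫ x in (0:ℝ)..1, F k x
        = (K * bb k * y^k) * (Real.Gamma (1/2 + k) * Real.Gamma (c-1/2) / Real.Gamma (c + k)) := by
      rw [hF]
      rw [intervalIntegral.integral_const_mul, hval]
    rw [hint, Gamma_poch (by norm_num : (0:ℝ) < 1/2) k, Gamma_poch (by linarith : (0:ℝ) < c) k]
    have hpc : (0:ℝ) < poch c k := poch_pos (by linarith) k
    have hfk : (0:ℝ) < (Nat.factorial k : ℝ) := by positivity
    rw [hK, bb]
    have hfrac : Real.Gamma c / (Real.Gamma (1/2) * Real.Gamma (c-1/2))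
        * ((poch (1/2) k * Real.Gamma (1/2)) * Real.Gamma (c-1/2) / (poch c k * Real.Gamma c))
        = poch (1/2) k / poch c k := by
      rw [div_mul_div_comm, div_eq_div_iff (by positivity) hpc.ne']
      ring
    calc poch (1/2) k * poch (1/2) k / poch c k * y ^ k / (Nat.factorial k : ℝ)
        = (Real.Gamma c / (Real.Gamma (1/2) * Real.Gamma (c-1/2))
            * ((poch (1/2) k * Real.Gamma (1/2)) * Real.Gamma (c-1/2) / (poch c k * Real.Gamma c)))
          * (poch (1/2) k / (Nat.factorial k : ℝ) * y^k) := by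
          rw [hfrac]; ring
      _ = _ := by ring
  have hptwise : ∀ x ∈ Set.Ioo (0:ℝ) 1, ∑ k ∈ range N, F k x
      ≤ K * (x ^ ((1/2:ℝ) - 1) * (1-x) ^ ((c-1) - 1)) := by
    intro x hx
    obtain ⟨hx0, hx1⟩ := hx
    have h1x : 0 < 1 - x := by linarith
    set C : ℝ := K * (x ^ (-(1/2) : ℝ) * (1-x) ^ ((c - 1/2) - 1)) with hC
    have hCpos : 0 < C := by positivity
    have hsum : ∑ k ∈ range N, F k x = (∑ k ∈ range N, bb k * (y*x)^k) * C := by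
      rw [Finset.sum_mul]
      refine Finset.sum_congr rfl fun k _ => ?_
      have hxpow : x ^ ((1/2 + (k:ℝ)) - 1) = x ^ (k:ℕ) * x ^ (-(1/2) : ℝ) := by
        rw [← Real.rpow_natCast x k, ← Real.rpow_add hx0]
        congr 1
        ring
      simp only [hF, hC]
      rw [hxpow, mul_pow]
      ring
    have hyx0 : 0 ≤ y * x := by positivity
    have hyx1 : y * x < 1 := by nlinarith
    have hP := psum_le hyx0 hyx1 N
    have hmono : (1 - y*x) ^ (-(1/2) : ℝ) ≤ (1 - x) ^ (-(1/2) : ℝ) :=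
      Real.rpow_le_rpow_of_nonpos h1x (by nlinarith) (by norm_num)
    have hle : ∑ k ∈ range N, bb k * (y*x)^k ≤ (1-x) ^ (-(1/2) : ℝ) := hP.trans hmono
    have hfinal : (1-x) ^ (-(1/2) : ℝ) * C = K * (x ^ ((1/2:ℝ) - 1) * (1-x) ^ ((c-1) - 1)) := by
      rw [hC]
      have e1 : (1-x) ^ (-(1/2) : ℝ) * (1-x) ^ ((c - 1/2) - 1) = (1-x) ^ ((c-1) - 1) := by
        rw [← Real.rpow_add h1x]
        congr 1
        ring
      have e2 : x ^ (-(1/2) : ℝ) = x ^ ((1/2:ℝ) - 1) := by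
        congr 1
        norm_num
      rw [← e1, e2]
      ring
    calc ∑ k ∈ range N, F k x = (∑ k ∈ range N, bb k * (y*x)^k) * C := hsum
      _ ≤ (1-x) ^ (-(1/2) : ℝ) * C := mul_le_mul_of_nonneg_right hle hCpos.le
      _ = _ := hfinal
  have hGint : IntervalIntegrable (fun x : ℝ => K * (x ^ ((1/2:ℝ) - 1) * (1-x) ^ ((c-1) - 1)))
      MeasureTheory.volume 0 1 :=
    (rbeta_integrable (by norm_num) (by linarith)).const_mul _
  have hSint : IntervalIntegrable (fun x : ℝ => ∑ k ∈ range N, F k x)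
      MeasureTheory.volume 0 1 := by
    have h := IntervalIntegrable.sum (μ := MeasureTheory.volume) (a := 0) (b := 1)
      (range N) (fun k _ => hFint k)
    have he : (∑ k ∈ range N, F k) = (fun x => ∑ k ∈ range N, F k x) := by
      ext x; simp
    rwa [he] at h
  have hae : (fun x : ℝ => ∑ k ∈ range N, F k x)
      ≤ᵐ[MeasureTheory.volume.restrict (Set.Icc (0:ℝ) 1)]
      (fun x : ℝ => K * (x ^ ((1/2:ℝ) - 1) * (1-x) ^ ((c-1) - 1))) := by
    have hnull : MeasureTheory.volume ({0, 1} : Set ℝ) = 0 :=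
      Set.Countable.measure_zero
        (((Set.finite_singleton (1:ℝ)).insert 0).countable) _
    have h1 : ∀ᵐ (x:ℝ) ∂(MeasureTheory.volume.restrict (Set.Icc (0:ℝ) 1)),
        x ∉ ({0, 1} : Set ℝ) := by
      apply MeasureTheory.ae_restrict_of_ae
      rw [MeasureTheory.ae_iff]
      have : {a : ℝ | ¬ a ∉ ({0,1} : Set ℝ)} = ({0,1} : Set ℝ) := by
        ext a; simp; tauto
      rw [this]
      exact hnull
    have h2 := MeasureTheory.ae_restrict_mem (μ := MeasureTheory.volume) (measurableSet_Icc (a := (0:ℝ)) (b := 1))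
    filter_upwards [h1, h2] with x hx1 hx2
    apply hptwise
    simp only [Set.mem_insert_iff, Set.mem_singleton_iff, not_or] at hx1
    exact ⟨lt_of_le_of_ne hx2.1 (Ne.symm hx1.1), lt_of_le_of_ne hx2.2 hx1.2⟩
  have hchain : ∑ k ∈ range N, poch (1/2) k * poch (1/2) k / poch c k * y^k / (Nat.factorial k)
      ≤ ∫ x in (0:ℝ)..1, K * (x ^ ((1/2:ℝ) - 1) * (1-x) ^ ((c-1) - 1)) := by
    calc ∑ k ∈ range N, poch (1/2) k * poch (1/2) k / poch c k * y^k / (Nat.factorial k)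
        = ∑ k ∈ range N, ∫ x in (0:ℝ)..1, F k x := Finset.sum_congr rfl fun k _ => hterm k
      _ = ∫ x in (0:ℝ)..1, ∑ k ∈ range N, F k x :=
          (intervalIntegral.integral_finset_sum (fun k _ => hFint k)).symm
      _ ≤ _ := intervalIntegral.integral_mono_ae_restrict zero_le_one hSint hGint hae
  refine hchain.trans_eq ?_
  rw [intervalIntegral.integral_const_mul, rbeta_value (by norm_num) (by linarith)]
  rw [show (1:ℝ)/2 + (c-1) = c - 1/2 by ring, hK]
  rw [div_mul_div_comm, div_eq_div_iff (by positivity) (by positivity)]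
  ring

/-- The correlation of the `t` process is dominated by the underlying Gaussian correlation:
`|g(x)| ≤ |x|` on `[-1,1]`. -/
theorem stmt4 (ν : ℝ) (hν : 2 < ν) :
    ∀ x ∈ Set.Icc (-1:ℝ) 1, |gfun ν x| ≤ |x| := by

  intro x hx
  obtain ⟨hx1, hx2⟩ := hx
  set c : ℝ := ν/2 with hcdef
  have hc : 1 < c := by rw [hcdef]; linarith
  have hGc : 0 < Real.Gamma c := Real.Gamma_pos_of_pos (by linarith)
  have hGc12 : 0 < Real.Gamma (c-1/2) := Real.Gamma_pos_of_pos (by linarith)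
  have hGc1 : 0 < Real.Gamma (c-1) := Real.Gamma_pos_of_pos (by linarith)
  have hy0 : (0:ℝ) ≤ x^2 := sq_nonneg x
  have hy1 : x^2 ≤ 1 := by nlinarith
  set S : ℝ := Real.Gamma c * Real.Gamma (c-1) / Real.Gamma (c-1/2)^2 with hS
  have hterm_nonneg : ∀ k : ℕ,
      0 ≤ poch (1/2) k * poch (1/2) k / poch c k * (x^2)^k / (Nat.factorial k) := by
    intro k
    have h1 := poch_pos (by norm_num : (0:ℝ) < 1/2) k
    have h2 := poch_pos (by linarith : (0:ℝ) < c) k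
    have h3 : (0:ℝ) < (Nat.factorial k : ℝ) := by positivity
    positivity
  have hF_le : hyp2F1 (1/2) (1/2) c (x^2) ≤ S := by
    rw [hyp2F1]
    exact Real.tsum_le_of_sum_range_le hterm_nonneg
      (fun N => hyp_partial_bound hc hy0 hy1 N)
  have hF_nonneg : 0 ≤ hyp2F1 (1/2) (1/2) c (x^2) := by
    rw [hyp2F1]
    exact tsum_nonneg hterm_nonneg
  have hA : 0 < acoef ν := by
    rw [acoef]
    have hG1 : 0 < Real.Gamma ((ν-1)/2) := Real.Gamma_pos_of_pos (by linarith)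
    have hG2 : 0 < Real.Gamma (ν/2) := Real.Gamma_pos_of_pos (by linarith)
    have : (0:ℝ) < ν - 2 := by linarith
    positivity
  have hGrec : Real.Gamma c = (c-1) * Real.Gamma (c-1) := by
    have h := Real.Gamma_add_one (show c-1 ≠ 0 by linarith)
    rwa [sub_add_cancel] at h
  have hAS : acoef ν * S = 1 := by
    rw [acoef, hS]
    have h1 : (ν-1)/2 = c - 1/2 := by rw [hcdef]; ring
    have h2 : ν - 2 = 2*(c-1) := by rw [hcdef]; ring
    rw [h1, h2, hGrec]
    have hc1 : (0:ℝ) < c - 1 := by linarith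
    rw [div_mul_div_comm, div_eq_one_iff_eq (by positivity)]
    ring
  have habs : |gfun ν x| = acoef ν * hyp2F1 (1/2) (1/2) c (x^2) * |x| := by
    rw [gfun, ← hcdef, abs_mul, abs_mul, abs_of_pos hA, abs_of_nonneg hF_nonneg]
    ring
  rw [habs]
  calc acoef ν * hyp2F1 (1/2) (1/2) c (x^2) * |x|
      ≤ acoef ν * S * |x| :=
        mul_le_mul_of_nonneg_right (mul_le_mul_of_nonneg_left hF_le hA.le) (abs_nonneg x)
    _ = |x| := by rw [hAS, one_mul]
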